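/- Rado's example: there exists a well quasiorder Q such that the set Q^ω of infinite sequences over Q, with the quasiorder f ≤ g iff there is a strictly increasing φ: ℕ → ℕ with f(i) ≤ g(φ(i)) for all i, is not a well quasiorder. Specifically, Q = {(i,j) ∈ ℕ² : i < j} with (i,j) ≤ (i',j') iff (i = i' and j ≤ j') or j < i' works. -/

import Mathlib

/-- Rado's order: pairs (i,j) with i < j. -/
def Rado : Type := {p : ℕ × ℕ // p.1 < p.2}

def radoLe (a b : Rado) : Prop :=
  (a.1.1 = b.1.1 ∧ a.1.2 ≤ b.1.2) ∨ a.1.2 < b.1.1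

/-- The quasiorder on infinite sequences over Rado's order. -/
def radoLeOmega (f g : ℕ → Rado) : Prop :=
  ∃ φ : ℕ → ℕ, StrictMono φ ∧ ∀ i, radoLe (f i) (g (φ i))

/-- Any sequence of naturals has an index whose value is ≤ all later values. -/
lemma nat_min_attained (c : ℕ → ℕ) : ∃ i, ∀ j, c i ≤ c j := by
  classical
  exact ⟨Function.argmin c, fun j => Function.argmin_le c j⟩

def radoBad : ℕ → ℕ → Rado := fun n k => ⟨(n, n + k + 1), by omega⟩

/-- Rado's example: Rado's order is WQO, but the induced
quasiorder on infinite sequences over it is not WQO. -/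
theorem stmt_10 :
    (∀ f : ℕ → Rado, ∃ i j : ℕ, i < j ∧ radoLe (f i) (f j)) ∧
    ¬ (∀ F : ℕ → (ℕ → Rado), ∃ i j : ℕ, i < j ∧ radoLeOmega (F i) (F j)) := by
  constructor
  · intro f
    set a : ℕ → ℕ := fun n => (f n).1.1 with ha
    set b : ℕ → ℕ := fun n => (f n).1.2 with hb
    by_cases h : ∃ n, 0 < n ∧ b 0 < a n
    · obtain ⟨n, hn, hlt⟩ := h
      exact ⟨0, n, hn, Or.inr hlt⟩
    · push_neg at h
      -- all a (n+1) ≤ b 0 : pigeonhole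
      have hbd : ∀ n : ℕ, a (n + 1) < b 0 + 1 := by
        intro n
        have := h (n + 1) (Nat.succ_pos n)
        omega
      let g : ℕ → Fin (b 0 + 1) := fun n => ⟨a (n + 1), hbd n⟩
      obtain ⟨v, hv⟩ := Finite.exists_infinite_fiber g
      have hv' : (g ⁻¹' {v}).Infinite := Set.infinite_coe_iff.mp hv
      have hset : {n | n ∈ g ⁻¹' {v}}.Infinite := by exact hv'
      let e : ℕ → ℕ := Nat.nth (· ∈ g ⁻¹' {v})
      have hmono : StrictMono e := Nat.nth_strictMono hset
      have hmem : ∀ k, g (e k) = v := fun k => Nat.nth_mem_of_infinite hset k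
      obtain ⟨i, hi⟩ := nat_min_attained (fun k => b (e k + 1))
      refine ⟨e i + 1, e (i + 1) + 1, by have := hmono (show i < i + 1 by omega); omega, ?_⟩
      left
      constructor
      · have h1 := hmem i
        have h2 := hmem (i + 1)
        have : a (e i + 1) = a (e (i + 1) + 1) := by
          have := congrArg Fin.val h1
          have := congrArg Fin.val h2
          simp only [g] at *
          omega
        exact this
      · exact hi (i + 1)
  · intro h
    obtain ⟨i, j, hij, φ, hφ, hle⟩ := h radoBad
    have := hle j
    simp only [radoBad, radoLe] at this
    omega
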